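/- If the generalized Bochner curvature tensor of R vanishes, B* = 0, then for every unit vector X ∈ V one has R(X,JX,JX,X) = (4/(m+2)) S*(X,X) − τ*/((m+1)(m+2)). -/

import Mathlib

open RealInnerProductSpace
open scoped BigOperators

noncomputable section

/-- A (curried) 4-linear form on `V`. -/
abbrev Tensor4 (V : Type*) [NormedAddCommGroup V] [InnerProductSpace ℝ V] :=
  V →ₗ[ℝ] V →ₗ[ℝ] V →ₗ[ℝ] V →ₗ[ℝ] ℝ

variable {V : Type*} [NormedAddCommGroup V] [InnerProductSpace ℝ V]

/-- `J` is an orthogonal complex structure: `J ∘ J = -id` and `g(JX, JY) = g(X, Y)`. -/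
def OrthJ (J : V →ₗ[ℝ] V) : Prop :=
  (∀ X : V, J (J X) = -X) ∧ (∀ X Y : V, ⟪J X, J Y⟫ = ⟪X, Y⟫)

/-- `R` is a curvature-like tensor. -/
def CurvatureLike (R : Tensor4 V) : Prop :=
  (∀ X Y Z U : V, R X Y Z U = - R Y X Z U) ∧
  (∀ X Y Z U : V, R X Y Z U = - R X Y U Z) ∧
  (∀ X Y Z U : V, R X Y Z U = R Z U X Y) ∧
  (∀ X Y Z U : V, R X Y Z U + R Y Z X U + R Z X Y U = 0)

/-- `R` is an RK-tensor: `R(X,Y,Z,U) = R(JX,JY,JZ,JU)`. -/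
def IsRK (J : V →ₗ[ℝ] V) (R : Tensor4 V) : Prop :=
  ∀ X Y Z U : V, R X Y Z U = R (J X) (J Y) (J Z) (J U)

/-- The tensor `R*` associated to `R` and `J`. -/
def Rstar (J : V →ₗ[ℝ] V) (R : Tensor4 V) (X Y Z U : V) : ℝ :=
  (3 / 16) * (R X Y Z U + R X Y (J Z) (J U) + R (J X) (J Y) Z U +
      R (J X) (J Y) (J Z) (J U)) +
  (1 / 16) * (R (J X) (J Z) Y U - R (J Y) (J Z) X U + R X Z (J Y) (J U) -
      R Y Z (J X) (J U) + R Y (J Z) (J X) U - R X (J Z) (J Y) U +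
      R (J Y) Z X (J U) - R (J X) Z Y (J U))

variable {ι : Type*} [Fintype ι]

/-- The Ricci form `S(X,Y) = Σᵢ R(X,Eᵢ,Eᵢ,Y)`. -/
def ric (b : OrthonormalBasis ι ℝ V) (R : Tensor4 V) (X Y : V) : ℝ :=
  ∑ i, R X (b i) (b i) Y

/-- `S'(X,Y) = Σᵢ R(X,Eᵢ,JEᵢ,JY)`. -/
def ric' (J : V →ₗ[ℝ] V) (b : OrthonormalBasis ι ℝ V) (R : Tensor4 V) (X Y : V) : ℝ :=
  ∑ i, R X (b i) (J (b i)) (J Y)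

/-- `S*(X,Y) = Σᵢ R*(X,Eᵢ,Eᵢ,Y)`. -/
def ricStar (J : V →ₗ[ℝ] V) (b : OrthonormalBasis ι ℝ V) (R : Tensor4 V) (X Y : V) : ℝ :=
  ∑ i, Rstar J R X (b i) (b i) Y

/-- The scalar curvature `τ = Σᵢ S(Eᵢ,Eᵢ)`. -/
def scal (b : OrthonormalBasis ι ℝ V) (R : Tensor4 V) : ℝ :=
  ∑ i, ric b R (b i) (b i)

/-- `τ' = Σᵢ S'(Eᵢ,Eᵢ)`. -/
def scal' (J : V →ₗ[ℝ] V) (b : OrthonormalBasis ι ℝ V) (R : Tensor4 V) : ℝ :=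
  ∑ i, ric' J b R (b i) (b i)

/-- `τ* = Σᵢ S*(Eᵢ,Eᵢ)`. -/
def scalStar (J : V →ₗ[ℝ] V) (b : OrthonormalBasis ι ℝ V) (R : Tensor4 V) : ℝ :=
  ∑ i, ricStar J b R (b i) (b i)

/-- The operator `φ` applied to a bilinear form `Q`. -/
def phi (Q : V → V → ℝ) (X Y Z U : V) : ℝ :=
  ⟪X, U⟫ * Q Y Z - ⟪X, Z⟫ * Q Y U + ⟪Y, Z⟫ * Q X U - ⟪Y, U⟫ * Q X Z

/-- The operator `ψ` applied to a bilinear form `Q`. -/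
def psi (J : V →ₗ[ℝ] V) (Q : V → V → ℝ) (X Y Z U : V) : ℝ :=
  ⟪X, J U⟫ * Q Y (J Z) - ⟪X, J Z⟫ * Q Y (J U) - 2 * ⟪X, J Y⟫ * Q Z (J U) +
  ⟪Y, J Z⟫ * Q X (J U) - ⟪Y, J U⟫ * Q X (J Z) - 2 * ⟪Z, J U⟫ * Q X (J Y)

/-- `π₁(X,Y,Z,U) = g(X,U)g(Y,Z) − g(X,Z)g(Y,U)`. -/
def pi1 (X Y Z U : V) : ℝ :=
  ⟪X, U⟫ * ⟪Y, Z⟫ - ⟪X, Z⟫ * ⟪Y, U⟫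

/-- `π₂(X,Y,Z,U) = g(X,JU)g(Y,JZ) − g(X,JZ)g(Y,JU) − 2g(X,JY)g(Z,JU)`. -/
def pi2 (J : V →ₗ[ℝ] V) (X Y Z U : V) : ℝ :=
  ⟪X, J U⟫ * ⟪Y, J Z⟫ - ⟪X, J Z⟫ * ⟪Y, J U⟫ - 2 * ⟪X, J Y⟫ * ⟪Z, J U⟫

/-- The generalized Bochner curvature tensor `B*`. -/
def Bstar (m : ℕ) (J : V →ₗ[ℝ] V) (b : OrthonormalBasis ι ℝ V) (R : Tensor4 V)
    (X Y Z U : V) : ℝ :=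
  Rstar J R X Y Z U
    - (1 / (2 * ((m : ℝ) + 2))) *
        (phi (ricStar J b R) X Y Z U + psi J (ricStar J b R) X Y Z U)
    + (scalStar J b R / (4 * ((m : ℝ) + 1) * ((m : ℝ) + 2))) *
        (pi1 X Y Z U + pi2 J X Y Z U)

/-- The Bochner curvature tensor `B` of an RK-tensor. -/
def Bochner (m : ℕ) (J : V →ₗ[ℝ] V) (b : OrthonormalBasis ι ℝ V) (R : Tensor4 V)
    (X Y Z U : V) : ℝ :=
  R X Y Z U
    - (1 / (8 * ((m : ℝ) + 2))) *
        (phi (fun x y => ric b R x y + 3 * ric' J b R x y) X Y Z U +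
         psi J (fun x y => ric b R x y + 3 * ric' J b R x y) X Y Z U)
    - (1 / (8 * ((m : ℝ) - 2))) *
        (3 * phi (fun x y => ric b R x y - ric' J b R x y) X Y Z U -
         psi J (fun x y => ric b R x y - ric' J b R x y) X Y Z U)
    + ((scal b R + 3 * scal' J b R) / (16 * ((m : ℝ) + 1) * ((m : ℝ) + 2))) *
        (pi1 X Y Z U + pi2 J X Y Z U)
    + ((scal b R - scal' J b R) / (16 * ((m : ℝ) - 1) * ((m : ℝ) - 2))) *
        (3 * pi1 X Y Z U - pi2 J X Y Z U)

section AuxLemmas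

variable {V₀ : Type*} [NormedAddCommGroup V₀] [InnerProductSpace ℝ V₀]
variable {ι₀ : Type*} [Fintype ι₀]

lemma OrthJ.skew {J : V₀ →ₗ[ℝ] V₀} (hJ : OrthJ J) (X Y : V₀) : ⟪J X, Y⟫ = -⟪X, J Y⟫ := by
  have h := hJ.2 (J X) Y
  rw [hJ.1] at h
  rw [← h, inner_neg_left]

lemma trace_J {J : V₀ →ₗ[ℝ] V₀} (hJ : OrthJ J) (b : OrthonormalBasis ι₀ ℝ V₀)
    (f : V₀ →ₗ[ℝ] V₀ →ₗ[ℝ] ℝ) :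
    ∑ i, f (J (b i)) (J (b i)) = ∑ i, f (b i) (b i) := by
  classical
  have expand : ∀ x y : V₀, f x y = ∑ j, ∑ k, ⟪b j, x⟫ * ⟪b k, y⟫ * f (b j) (b k) := by
    intro x y
    conv_lhs => rw [← b.sum_repr' x, ← b.sum_repr' y]
    simp [map_sum, LinearMap.sum_apply, map_smul, LinearMap.smul_apply, smul_eq_mul,
      Finset.mul_sum, mul_assoc]
    rw [Finset.sum_comm]
    exact Finset.sum_congr rfl fun j _ => Finset.sum_congr rfl fun k _ => by ring
  calc ∑ i, f (J (b i)) (J (b i))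
      = ∑ i, ∑ j, ∑ k, ⟪b j, J (b i)⟫ * ⟪b k, J (b i)⟫ * f (b j) (b k) :=
        Finset.sum_congr rfl fun i _ => expand _ _
    _ = ∑ j, ∑ k, (∑ i, ⟪b j, J (b i)⟫ * ⟪b k, J (b i)⟫) * f (b j) (b k) := by
        rw [Finset.sum_comm]
        refine Finset.sum_congr rfl fun j _ => ?_
        rw [Finset.sum_comm]
        refine Finset.sum_congr rfl fun k _ => ?_
        rw [Finset.sum_mul]
    _ = ∑ j, ∑ k, (⟪b j, b k⟫ : ℝ) * f (b j) (b k) := by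
        refine Finset.sum_congr rfl fun j _ => Finset.sum_congr rfl fun k _ => ?_
        congr 1
        have h1 : ∀ i, ⟪b j, J (b i)⟫ * ⟪b k, J (b i)⟫
            = ⟪J (b j), b i⟫ * ⟪b i, J (b k)⟫ := by
          intro i
          have e1 : ⟪b j, J (b i)⟫ = -⟪J (b j), b i⟫ := by
            rw [hJ.skew (b j) (b i)]; ring_nf
          have e2 : ⟪b k, J (b i)⟫ = -⟪b i, J (b k)⟫ := by
            rw [real_inner_comm, hJ.skew]
          rw [e1, e2]; ring
        rw [Finset.sum_congr rfl fun i _ => h1 i, b.sum_inner_mul_inner, hJ.2]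
    _ = ∑ j, f (b j) (b j) := by
        have hb := orthonormal_iff_ite.mp b.orthonormal
        refine Finset.sum_congr rfl fun j _ => ?_
        simp [hb]

end AuxLemmas

section AuxLemmas2

variable {V₀ : Type*} [NormedAddCommGroup V₀] [InnerProductSpace ℝ V₀]
variable {ι₀ : Type*} [Fintype ι₀]

lemma tensor4_neg_fst (R : Tensor4 V₀) (X Y Z U : V₀) : R (-X) Y Z U = - R X Y Z U := by
  rw [← neg_one_smul ℝ X, map_smul]
  simp only [LinearMap.smul_apply, smul_eq_mul, neg_one_mul]

lemma rstar_J_inv {J : V₀ →ₗ[ℝ] V₀} (hJ : OrthJ J) (R : Tensor4 V₀) (X Y Z U : V₀) :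
    Rstar J R (J X) (J Y) (J Z) (J U) = Rstar J R X Y Z U := by
  simp only [Rstar, hJ.1, tensor4_neg_fst, map_neg, LinearMap.neg_apply, neg_neg]
  ring

lemma rstar_neg23 {J : V₀ →ₗ[ℝ] V₀} (R : Tensor4 V₀) (X Y Z U : V₀) :
    Rstar J R X (-Y) (-Z) U = Rstar J R X Y Z U := by
  simp only [Rstar, tensor4_neg_fst, map_neg, LinearMap.neg_apply, neg_neg]

lemma rstar_neg4 {J : V₀ →ₗ[ℝ] V₀} (R : Tensor4 V₀) (X Y Z U : V₀) :
    Rstar J R X Y Z (-U) = -Rstar J R X Y Z U := by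
  simp only [Rstar, tensor4_neg_fst, map_neg, LinearMap.neg_apply]
  ring

lemma rstar_diag {J : V₀ →ₗ[ℝ] V₀} (hJ : OrthJ J) {R : Tensor4 V₀} (hR : CurvatureLike R)
    (X : V₀) : Rstar J R X (J X) (J X) X = R X (J X) (J X) X := by
  obtain ⟨h1, h2, h3, h4⟩ := hR
  have hA1 : R X (J X) X (J X) = - R X (J X) (J X) X := h2 X (J X) X (J X)
  have hA2 : R (J X) X (J X) X = - R X (J X) (J X) X := h1 (J X) X (J X) X
  have hA3 : R (J X) X X (J X) = R X (J X) (J X) X := by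
    rw [h1 (J X) X X (J X), h2 X (J X) X (J X)]; ring
  have hz1 : R X X X X = 0 := by have := h1 X X X X; linarith
  have hz2 : R (J X) (J X) (J X) (J X) = 0 := by have := h1 (J X) (J X) (J X) (J X); linarith
  simp only [Rstar, hJ.1, tensor4_neg_fst, map_neg, LinearMap.neg_apply, neg_neg]
  linarith

/-- The bilinear map `(u,v) ↦ R*(X,u,v,X)`. -/
def rstarBil (J : V₀ →ₗ[ℝ] V₀) (R : Tensor4 V₀) (X : V₀) : V₀ →ₗ[ℝ] V₀ →ₗ[ℝ] ℝ :=
  LinearMap.mk₂ ℝ (fun u v => Rstar J R X u v X)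
    (fun u u' v => by simp only [Rstar, map_add, LinearMap.add_apply]; ring)
    (fun c u v => by
      simp only [Rstar, map_smul, LinearMap.smul_apply, smul_eq_mul]; ring)
    (fun u v v' => by simp only [Rstar, map_add, LinearMap.add_apply]; ring)
    (fun u c v => by
      simp only [Rstar, map_smul, LinearMap.smul_apply, smul_eq_mul]; ring)

lemma ricStar_neg_right {J : V₀ →ₗ[ℝ] V₀} (b : OrthonormalBasis ι₀ ℝ V₀) (R : Tensor4 V₀)
    (X Y : V₀) : ricStar J b R X (-Y) = -ricStar J b R X Y := by
  rw [ricStar, ricStar, ← Finset.sum_neg_distrib]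
  exact Finset.sum_congr rfl fun i _ => rstar_neg4 R X (b i) (b i) Y

lemma ricStar_J {J : V₀ →ₗ[ℝ] V₀} (hJ : OrthJ J) (b : OrthonormalBasis ι₀ ℝ V₀)
    (R : Tensor4 V₀) (X : V₀) :
    ricStar J b R (J X) (J X) = ricStar J b R X X := by
  have step : ∀ i, Rstar J R (J X) (b i) (b i) (J X)
      = Rstar J R X (J (b i)) (J (b i)) X := by
    intro i
    have h := rstar_J_inv hJ R X (J (b i)) (J (b i)) X
    rw [hJ.1 (b i)] at h
    rwa [rstar_neg23] at h
  rw [ricStar, Finset.sum_congr rfl fun i _ => step i]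
  have h := trace_J hJ b (rstarBil J R X)
  simpa [rstarBil, ricStar] using h

end AuxLemmas2

/-- if `B* = 0` then for unit `X`,
`R(X,JX,JX,X) = (4/(m+2)) S*(X,X) − τ*/((m+1)(m+2))`. -/
theorem holSec_of_Bstar_eq_zero {V : Type*} [NormedAddCommGroup V] [InnerProductSpace ℝ V]
    [FiniteDimensional ℝ V] {m : ℕ} (hm : 1 ≤ m) (hdim : Module.finrank ℝ V = 2 * m)
    (J : V →ₗ[ℝ] V) (hJ : OrthJ J) (R : Tensor4 V) (hR : CurvatureLike R)
    (b : OrthonormalBasis (Fin (2 * m)) ℝ V)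
    (hB : ∀ X Y Z U : V, Bstar m J b R X Y Z U = 0) :
    ∀ X : V, ‖X‖ = 1 →
      R X (J X) (J X) X =
        (4 / ((m : ℝ) + 2)) * ricStar J b R X X -
          scalStar J b R / (((m : ℝ) + 1) * ((m : ℝ) + 2)) := by
  intro X hX
  have h0 : ⟪X, X⟫ = 1 := by
    have h := real_inner_self_eq_norm_mul_norm X
    rw [hX] at h; simpa using h
  have hXJ : ⟪X, J X⟫ = 0 := by
    have h := hJ.skew X X
    have h2 := real_inner_comm (J X) X
    linarith
  have hJX : ⟪J X, X⟫ = 0 := by rw [real_inner_comm]; exact hXJ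
  have hJJ : ⟪J X, J X⟫ = 1 := by rw [hJ.2]; exact h0
  have hrsJ : ricStar J b R (J X) (J X) = ricStar J b R X X := ricStar_J hJ b R X
  have hrsN : ricStar J b R X (-X) = -ricStar J b R X X := ricStar_neg_right b R X X
  have hdiag := rstar_diag hJ hR X
  have key := hB X (J X) (J X) X
  simp only [Bstar, phi, psi, pi1, pi2, hJ.1, inner_neg_right, inner_neg_left,
    hXJ, hJX, h0, hJJ, hrsJ, hrsN, hdiag, neg_zero, zero_mul, mul_zero, neg_neg,
    mul_one, one_mul, mul_neg, neg_mul, sub_zero, zero_sub, sub_neg_eq_add,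
    add_zero, zero_add] at key
  have hm2 : ((m:ℝ) + 2) ≠ 0 := by positivity
  have hm1 : ((m:ℝ) + 1) ≠ 0 := by positivity
  field_simp at key ⊢
  linarith
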